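/- arXiv:1507.03270 — 2 statements merged into one kernel-verified Lean document; each statement's English description precedes it below -/
import Mathlib

section
/- Let L be a lattice and a ≤ b, c ≤ d in L. Then c ≡ d modulo the principal congruence con(a,b) if and only if there is an ascending sequence c = e₀ ≤ e₁ ≤ ⋯ ≤ eₙ = d such that [a,b] is congruence-projective onto [eⱼ, eⱼ₊₁] for every j = 0,…,n−1. -/
/-- A lattice congruence: an equivalence relation compatible with `⊔` and `⊓`. -/
def IsLatCon {L : Type*} [Lattice L] (r : L → L → Prop) : Prop :=
  Equivalence r ∧ (∀ a b c d, r a b → r c d → r (a ⊔ c) (b ⊔ d)) ∧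
    (∀ a b c d, r a b → r c d → r (a ⊓ c) (b ⊓ d))

/-- `conRel a b x y` : the pair `(x,y)` is in the smallest congruence collapsing `a` and `b`. -/
def conRel {L : Type*} [Lattice L] (a b : L) (x y : L) : Prop :=
  ∀ r : L → L → Prop, IsLatCon r → r a b → r x y

/-- The alternating term t(x, y₀, …). -/
def altApply {L : Type*} [Lattice L] : L → List L → Bool → L
  | x, [], _ => x
  | x, p :: ps, b => altApply (if b then x ⊔ p else x ⊓ p) ps (!b)

/-- `[a,b]` is congruence-projective onto `[c,d]`. -/
def CongProj {L : Type*} [Lattice L] (a b c d : L) : Prop :=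
  ∃ ps : List L, altApply a ps true = c ∧ altApply b ps true = d

namespace ConChainAux

variable {L : Type*} [Lattice L]

/-- One can extend an alternating term by a final join with `q`, uniformly in two
starting points. -/
lemma ext_sup : ∀ (ps : List L) (bb : Bool) (x y q : L),
    ∃ ps' : List L, altApply x ps' bb = altApply x ps bb ⊔ q ∧
      altApply y ps' bb = altApply y ps bb ⊔ q := by
  intro ps
  induction ps with
  | nil =>
      intro bb x y q
      cases bb with
      | true => exact ⟨[q], rfl, rfl⟩
      | false =>
          refine ⟨[x ⊔ y, q], ?_, ?_⟩ <;>
            simp [altApply, inf_sup_self, inf_comm, inf_sup_self]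
  | cons p ps ih =>
      intro bb x y q
      obtain ⟨ps', h1, h2⟩ := ih (!bb) (if bb then x ⊔ p else x ⊓ p)
        (if bb then y ⊔ p else y ⊓ p) q
      exact ⟨p :: ps', h1, h2⟩

/-- One can extend an alternating term by a final meet with `q`. -/
lemma ext_inf : ∀ (ps : List L) (bb : Bool) (x y q : L),
    ∃ ps' : List L, altApply x ps' bb = altApply x ps bb ⊓ q ∧
      altApply y ps' bb = altApply y ps bb ⊓ q := by
  intro ps
  induction ps with
  | nil =>
      intro bb x y q
      cases bb with
      | false => exact ⟨[q], rfl, rfl⟩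
      | true =>
          refine ⟨[x ⊓ y, q], ?_, ?_⟩ <;>
            simp [altApply, sup_inf_self, sup_comm, sup_inf_self]
  | cons p ps ih =>
      intro bb x y q
      obtain ⟨ps', h1, h2⟩ := ih (!bb) (if bb then x ⊔ p else x ⊓ p)
        (if bb then y ⊔ p else y ⊓ p) q
      exact ⟨p :: ps', h1, h2⟩

lemma congProj_sup {a b c d : L} (h : CongProj a b c d) (q : L) :
    CongProj a b (c ⊔ q) (d ⊔ q) := by
  obtain ⟨ps, h1, h2⟩ := h
  obtain ⟨ps', h1', h2'⟩ := ext_sup ps true a b q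
  exact ⟨ps', by rw [h1', h1], by rw [h2', h2]⟩

lemma congProj_inf {a b c d : L} (h : CongProj a b c d) (q : L) :
    CongProj a b (c ⊓ q) (d ⊓ q) := by
  obtain ⟨ps, h1, h2⟩ := h
  obtain ⟨ps', h1', h2'⟩ := ext_inf ps true a b q
  exact ⟨ps', by rw [h1', h1], by rw [h2', h2]⟩

/-- A single projectivity step. -/
def Step (a b : L) (c d : L) : Prop := c ≤ d ∧ CongProj a b c d

/-- Chains of projectivity steps. -/
def P (a b : L) : L → L → Prop := Relation.ReflTransGen (Step a b)

variable {a b : L}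

lemma P_sup {c d : L} (h : P a b c d) (q : L) : P a b (c ⊔ q) (d ⊔ q) := by
  induction h with
  | refl => exact Relation.ReflTransGen.refl
  | tail _ hstep ih =>
      exact ih.tail ⟨sup_le_sup_right hstep.1 q, congProj_sup hstep.2 q⟩

lemma P_inf {c d : L} (h : P a b c d) (q : L) : P a b (c ⊓ q) (d ⊓ q) := by
  induction h with
  | refl => exact Relation.ReflTransGen.refl
  | tail _ hstep ih =>
      exact ih.tail ⟨inf_le_inf_right q hstep.1, congProj_inf hstep.2 q⟩

lemma P_congr {c d c' d' : L} (h : P a b c d) (h1 : c = c') (h2 : d = d') :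
    P a b c' d' := h1 ▸ h2 ▸ h

lemma P_shrink {c d c' d' : L} (h : P a b c d) (h1 : c ≤ c') (h2 : c' ≤ d')
    (h3 : d' ≤ d) : P a b c' d' := by
  have hs : P a b c' d :=
    P_congr (P_sup h c') (sup_eq_right.mpr h1) (sup_eq_left.mpr (h2.trans h3))
  exact P_congr (P_inf hs d') (inf_eq_left.mpr h2) (inf_eq_right.mpr h3)

/-- The candidate congruence. -/
def R (a b : L) (x y : L) : Prop := P a b (x ⊓ y) (x ⊔ y)

lemma R_refl (x : L) : R a b x x := by
  unfold R; rw [inf_idem, sup_idem]; exact Relation.ReflTransGen.refl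

lemma R_symm {x y : L} (h : R a b x y) : R a b y x := by
  unfold R at *; rwa [inf_comm, sup_comm]

lemma R_trans {x y z : L} (hxy : R a b x y) (hyz : R a b y z) : R a b x z := by
  unfold R at *
  have h1 : P a b (x ⊓ y) y :=
    P_congr (P_inf hxy y) (by simp [inf_assoc]) (by simp)
  have h2 : P a b (y ⊓ z) y :=
    P_congr (P_inf hyz y)
      (by simp [inf_comm, inf_assoc, inf_left_comm]) (by simp)
  have h3 : P a b (x ⊓ y ⊓ z) (y ⊓ z) := P_inf h1 z
  have hu : P a b (x ⊓ y ⊓ z) y := h3.trans h2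
  have h4 : P a b y (y ⊔ z) :=
    P_congr (P_sup hyz y)
      (by simp [sup_comm, inf_le_left]) (by simp [sup_comm, sup_assoc, sup_left_comm])
  have h6 : P a b (y ⊔ z) (x ⊔ y ⊔ z) :=
    P_congr (P_sup hxy (y ⊔ z))
      (sup_eq_right.mpr (le_sup_of_le_left inf_le_right))
      (le_antisymm (sup_le le_sup_left
          (sup_le (le_sup_of_le_left le_sup_right) le_sup_right))
        (sup_le le_sup_left (le_sup_of_le_right le_sup_right)))
  have hv : P a b y (x ⊔ y ⊔ z) := h4.trans h6
  have huv : P a b (x ⊓ y ⊓ z) (x ⊔ y ⊔ z) := hu.trans hv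
  exact P_shrink huv (le_inf (inf_le_of_left_le inf_le_left) inf_le_right)
    inf_le_sup (sup_le (le_sup_of_le_left le_sup_left) le_sup_right)

lemma R_sup_right {x y : L} (h : R a b x y) (q : L) : R a b (x ⊔ q) (y ⊔ q) := by
  unfold R at *
  refine P_shrink (P_sup h q) (le_inf (sup_le_sup_right inf_le_left q)
    (sup_le_sup_right inf_le_right q)) inf_le_sup ?_
  exact sup_le (sup_le (le_sup_of_le_left le_sup_left) le_sup_right)
    (sup_le (le_sup_of_le_left le_sup_right) le_sup_right)

lemma R_inf_right {x y : L} (h : R a b x y) (q : L) : R a b (x ⊓ q) (y ⊓ q) := by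
  unfold R at *
  refine P_shrink (P_inf h q) ?_ inf_le_sup
    (sup_le (inf_le_inf_right q le_sup_left) (inf_le_inf_right q le_sup_right))
  exact le_inf (le_inf (inf_le_of_left_le inf_le_left) inf_le_right)
    (le_inf (inf_le_of_left_le inf_le_right) inf_le_right)

lemma isLatCon_R : IsLatCon (R (L := L) a b) := by
  refine ⟨⟨R_refl, R_symm, R_trans⟩, ?_, ?_⟩
  · intro x y u v h1 h2
    refine R_trans (R_sup_right h1 u) ?_
    rw [sup_comm y u, sup_comm y v]
    exact R_sup_right h2 y
  · intro x y u v h1 h2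
    refine R_trans (R_inf_right h1 u) ?_
    rw [inf_comm y u, inf_comm y v]
    exact R_inf_right h2 y

lemma R_ab (hab : a ≤ b) : R a b a b := by
  unfold R
  rw [inf_eq_left.mpr hab, sup_eq_right.mpr hab]
  exact Relation.ReflTransGen.single ⟨hab, [], rfl, rfl⟩

/-- Converting a `ReflTransGen` chain to a `Fin`-indexed chain. -/
lemma P_to_chain {c d : L} (h : P a b c d) :
    ∃ (n : ℕ) (e : Fin (n + 1) → L), e 0 = c ∧ e (Fin.last n) = d ∧
      (∀ j : Fin n, e j.castSucc ≤ e j.succ) ∧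
      (∀ j : Fin n, CongProj a b (e j.castSucc) (e j.succ)) := by
  induction h with
  | refl => exact ⟨0, fun _ => c, rfl, rfl, fun j => j.elim0, fun j => j.elim0⟩
  | @tail m d hcm hstep ih =>
      obtain ⟨n, e, he0, helast, hle, hcp⟩ := ih
      refine ⟨n + 1, Fin.snoc e d, ?_, ?_, ?_, ?_⟩
      · rw [show (0 : Fin (n + 2)) = Fin.castSucc 0 from rfl, Fin.snoc_castSucc, he0]
      · rw [Fin.snoc_last]
      · intro j
        refine Fin.lastCases ?_ ?_ j
        · rw [Fin.succ_last, Fin.snoc_last, Fin.snoc_castSucc, helast]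
          exact hstep.1
        · intro i
          rw [Fin.succ_castSucc, Fin.snoc_castSucc, Fin.snoc_castSucc]
          exact hle i
      · intro j
        refine Fin.lastCases ?_ ?_ j
        · rw [Fin.succ_last, Fin.snoc_last, Fin.snoc_castSucc, helast]
          exact hstep.2
        · intro i
          rw [Fin.succ_castSucc, Fin.snoc_castSucc, Fin.snoc_castSucc]
          exact hcp i

lemma r_altApply {r : L → L → Prop} (hr : IsLatCon r) :
    ∀ (ps : List L) (bb : Bool) (x y : L), r x y →
      r (altApply x ps bb) (altApply y ps bb) := by
  intro ps
  induction ps with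
  | nil => intro bb x y h; exact h
  | cons p ps ih =>
      intro bb x y h
      cases bb with
      | true => exact ih false (x ⊔ p) (y ⊔ p) (hr.2.1 _ _ _ _ h (hr.1.refl p))
      | false => exact ih true (x ⊓ p) (y ⊓ p) (hr.2.2 _ _ _ _ h (hr.1.refl p))

end ConChainAux

theorem con_iff_chain_of_congProj {L : Type*} [Lattice L] (a b c d : L)
    (hab : a ≤ b) (hcd : c ≤ d) :
    conRel a b c d ↔
      ∃ (n : ℕ) (e : Fin (n + 1) → L), e 0 = c ∧ e (Fin.last n) = d ∧
        (∀ j : Fin n, e j.castSucc ≤ e j.succ) ∧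
        (∀ j : Fin n, CongProj a b (e j.castSucc) (e j.succ)) := by
  constructor
  · intro h
    have hR := h (ConChainAux.R a b) ConChainAux.isLatCon_R (ConChainAux.R_ab hab)
    unfold ConChainAux.R at hR
    rw [inf_eq_left.mpr hcd, sup_eq_right.mpr hcd] at hR
    exact ConChainAux.P_to_chain hR
  · rintro ⟨n, e, he0, helast, _, hcp⟩ r hr hrab
    have key : ∀ i : Fin (n + 1), r (e 0) (e i) := by
      intro i
      induction i using Fin.induction with
      | zero => exact hr.1.refl _
      | succ i ihi =>
          refine hr.1.trans ihi ?_
          obtain ⟨ps, h1, h2⟩ := hcp i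
          have := ConChainAux.r_altApply hr ps true a b hrab
          rwa [h1, h2] at this
    have := key (Fin.last n)
    rwa [he0, helast] at this
end

section
/- Let K be a bounded lattice that is a {0,1}-sublattice of a bounded lattice L. Then the map ψ_Sub : Princ K → Princ L sending con_K(x,y) to con_L(x,y) is well-defined, isotone, preserves least and greatest elements, and is 0-separating: the only principal congruence of K mapped to the equality congruence of L is the equality congruence of K. -/
lemma conRel_self {L : Type*} [Lattice L] (a b : L) : conRel a b a b :=
  fun _ _ hr => hr

lemma conRel_mono {L : Type*} [Lattice L] {a b c d : L} (h : conRel a b c d) :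
    ∀ u v, conRel c d u v → conRel a b u v :=
  fun _ _ hcd r hr hab => hcd r hr (h r hr hab)

lemma conRel_push {K L : Type*} [Lattice K] [Lattice L] (f : LatticeHom K L)
    {x y u v : K} (h : conRel x y u v) : conRel (f x) (f y) (f u) (f v) := by
  intro r hr hxy
  refine h (fun a b => r (f a) (f b)) ?_ hxy
  obtain ⟨heq, hsup, hinf⟩ := hr
  refine ⟨⟨fun a => heq.refl _, fun h => heq.symm h, fun h1 h2 => heq.trans h1 h2⟩,
    fun a b c d h1 h2 => ?_, fun a b c d h1 h2 => ?_⟩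
  · simpa [map_sup] using hsup _ _ _ _ h1 h2
  · simpa [map_inf] using hinf _ _ _ _ h1 h2

lemma conRel_diag {L : Type*} [Lattice L] (a : L) : conRel a a = (Eq : L → L → Prop) := by
  funext u v
  apply propext
  constructor
  · intro h
    exact h Eq ⟨⟨fun _ => rfl, Eq.symm, Eq.trans⟩,
      fun a b c d h1 h2 => by rw [h1, h2], fun a b c d h1 h2 => by rw [h1, h2]⟩ rfl
  · rintro rfl
    intro r hr _
    exact hr.1.refl _

/-- `K` is a `{0,1}`-sublattice of `L`, represented by a `{0,1}`-preserving lattice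
embedding `f : K → L`.  The map `ψ_Sub : Princ K → Princ L`,
`con_K(x,y) ↦ con_L(x,y)`, is well-defined, isotone, preserves bounds and is
`0`-separating. -/
theorem subPrinc_isotone_zero_separating {K L : Type*} [Lattice K] [BoundedOrder K]
    [Lattice L] [BoundedOrder L] (f : LatticeHom K L)
    (hinj : Function.Injective f) (h0 : f ⊥ = ⊥) (h1 : f ⊤ = ⊤) :
    -- well-defined
    (∀ x y x' y' : K, conRel x y = conRel x' y' →
      conRel (f x) (f y) = conRel (f x') (f y')) ∧
    -- isotone
    (∀ x y x' y' : K, (∀ u v : K, conRel x y u v → conRel x' y' u v) →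
      ∀ u v : L, conRel (f x) (f y) u v → conRel (f x') (f y') u v) ∧
    -- preserves the least element (equality congruence) and the greatest element
    (∀ x : K, conRel (f x) (f x) = (Eq : L → L → Prop)) ∧
    conRel (f (⊥ : K)) (f (⊤ : K)) = conRel (⊥ : L) (⊤ : L) ∧
    -- 0-separating
    (∀ x y : K, conRel (f x) (f y) = (Eq : L → L → Prop) →
      conRel x y = (Eq : K → K → Prop)) := by
  refine ⟨?_, ?_, fun x => conRel_diag (f x), by rw [h0, h1], ?_⟩
  · intro x y x' y' h
    have h1 : conRel x y x' y' := h ▸ conRel_self x' y'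
    have h2 : conRel x' y' x y := h.symm ▸ conRel_self x y
    funext u v
    apply propext
    exact ⟨fun hv => conRel_mono (conRel_push f h2) u v hv,
      fun hv => conRel_mono (conRel_push f h1) u v hv⟩
  · intro x y x' y' h u v huv
    exact conRel_mono (conRel_push f (h x y (conRel_self x y))) u v huv
  · intro x y h
    have : f x = f y := h ▸ conRel_self (f x) (f y)
    rw [hinj this]
    exact conRel_diag y
end
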